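/- Let a ∈ B(H) have propagation at most p and suppose a agrees with 0 outside the r-neighborhood of W in the weak sense that ρ(φ)aρ(ψ) = 0 for all φ, ψ ∈ C₀(M) such that every point of supp φ and every point of supp ψ has distance > r from W. Then a is supported near W: ρ(φ)a = 0 = aρ(φ) for every φ ∈ C₀(M) with d(x, W) > r + p for all x ∈ supp φ. -/

import Mathlib

open Metric ZeroAtInfty

variable {M : Type*} [MetricSpace M] [ProperSpace M]
variable {H : Type*} [NormedAddCommGroup H] [InnerProductSpace ℂ H] [CompleteSpace H]

/-- `T` has propagation at most `p` with respect to the representation `ρ`. -/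
def HasPropagationLE (ρ : C₀(M, ℂ) →⋆ₙₐ[ℂ] (H →L[ℂ] H)) (T : H →L[ℂ] H) (p : ℝ) : Prop :=
  ∀ φ ψ : C₀(M, ℂ),
    (∀ x ∈ tsupport ⇑φ, ∀ y ∈ tsupport ⇑ψ, p < dist x y) → ρ φ * T * ρ ψ = 0

/-- `ρ` is a nondegenerate representation of `C₀(M)`. -/
def Nondegenerate (ρ : C₀(M, ℂ) →⋆ₙₐ[ℂ] (H →L[ℂ] H)) : Prop :=
  Dense (Submodule.span ℂ (⋃ φ : C₀(M, ℂ), Set.range ⇑(ρ φ)) : Set H)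

namespace FPAux

/-- clamp to `[0,1]` -/
noncomputable def clamp (t : ℝ) : ℝ := max 0 (min 1 t)

lemma clamp_nonneg (t : ℝ) : 0 ≤ clamp t := le_max_left _ _

lemma clamp_le_one (t : ℝ) : clamp t ≤ 1 := max_le zero_le_one (min_le_left 1 t)

lemma norm_clamp_le (t : ℝ) : ‖clamp t‖ ≤ 1 := by
  rw [Real.norm_eq_abs, abs_le]
  exact ⟨by linarith [clamp_nonneg t], clamp_le_one t⟩

lemma clamp_eq_one {t : ℝ} (h : 1 ≤ t) : clamp t = 1 := by
  unfold clamp; rw [min_eq_left h]; exact max_eq_right zero_le_one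

lemma pos_of_clamp_ne_zero {t : ℝ} (h : clamp t ≠ 0) : 0 < t := by
  by_contra h'
  push_neg at h'
  exact h (by unfold clamp; rw [min_eq_right (h'.trans zero_le_one)]; exact max_eq_left h')

lemma lt_one_of_clamp_ne_one {t : ℝ} (h : clamp t ≠ 1) : t < 1 := by
  by_contra h'
  push_neg at h'
  exact h (clamp_eq_one h')

lemma continuous_clamp : Continuous clamp :=
  continuous_const.max (continuous_const.min continuous_id)

/-- multiply a `C₀` function by a bounded continuous real cutoff. -/
noncomputable def cmul (χ : M → ℝ) (hc : Continuous χ) (hb : ∀ x, ‖χ x‖ ≤ 1)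
    (ψ : C₀(M, ℂ)) : C₀(M, ℂ) where
  toFun := fun x => χ x • ψ x
  continuous_toFun := hc.smul (map_continuous ψ)
  zero_at_infty' := by
    refine squeeze_zero_norm (f := fun x => χ x • ψ x) (a := fun x => ‖ψ x‖) (fun x => ?_)
      (tendsto_zero_iff_norm_tendsto_zero.mp (zero_at_infty ψ))
    rw [norm_smul]
    exact mul_le_of_le_one_left (norm_nonneg _) (hb x)

@[simp] lemma cmul_apply (χ : M → ℝ) (hc : Continuous χ) (hb : ∀ x, ‖χ x‖ ≤ 1)
    (ψ : C₀(M, ℂ)) (x : M) : cmul χ hc hb ψ x = χ x • ψ x := rfl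

/-- If `T ∘ ρ ψ = 0` for all `ψ` then `T = 0`, by nondegeneracy. -/
lemma ker_left (ρ : C₀(M, ℂ) →⋆ₙₐ[ℂ] (H →L[ℂ] H)) (hρ : Nondegenerate ρ)
    (T : H →L[ℂ] H) (h : ∀ ψ : C₀(M, ℂ), T * ρ ψ = 0) : T = 0 := by
  ext v
  have hsub : (⋃ φ : C₀(M, ℂ), Set.range ⇑(ρ φ)) ⊆ {x : H | T x = 0} := by
    rintro x hx
    simp only [Set.mem_iUnion, Set.mem_range] at hx
    obtain ⟨ψ, w, rfl⟩ := hx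
    simpa using DFunLike.congr_fun (h ψ) w
  have hspan : (Submodule.span ℂ (⋃ φ : C₀(M, ℂ), Set.range ⇑(ρ φ)) : Set H)
      ⊆ {x : H | T x = 0} := by
    intro x hx
    have hx' : x ∈ LinearMap.ker (T : H →ₗ[ℂ] H) :=
      Submodule.span_le.mpr (fun y hy => LinearMap.mem_ker.mpr (hsub hy)) hx
    exact LinearMap.mem_ker.mp hx'
  have hclosed : IsClosed {x : H | T x = 0} := isClosed_eq T.continuous continuous_const
  have hcl : closure (Submodule.span ℂ (⋃ φ : C₀(M, ℂ), Set.range ⇑(ρ φ)) : Set H)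
      ⊆ {x : H | T x = 0} := hclosed.closure_subset_iff.mpr hspan
  have hv : T v = 0 := hcl (by rw [hρ.closure_eq]; exact Set.mem_univ v)
  simpa using hv

/-- If `ρ ψ ∘ T = 0` for all `ψ` then `T = 0`, by nondegeneracy. -/
lemma ker_right (ρ : C₀(M, ℂ) →⋆ₙₐ[ℂ] (H →L[ℂ] H)) (hρ : Nondegenerate ρ)
    (T : H →L[ℂ] H) (h : ∀ ψ : C₀(M, ℂ), ρ ψ * T = 0) : T = 0 := by
  have hT : star T = 0 := by
    refine ker_left ρ hρ (star T) (fun ψ => ?_)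
    have h1 := congrArg star (h (star ψ))
    rwa [star_mul, star_zero, map_star, star_star] at h1
  simpa using congrArg star hT

end FPAux

open FPAux in
/-- the analytic core: assuming `0 ≤ p`, for `φ` supported `> r + p` away from `W`,
both `ρ φ * a * ρ ψ` and `ρ ψ * a * ρ φ` vanish for every `ψ`. -/
lemma FP_key (ρ : C₀(M, ℂ) →⋆ₙₐ[ℂ] (H →L[ℂ] H))
    (W : Set M)
    (a : H →L[ℂ] H) (p : ℝ) (ha : HasPropagationLE ρ a p) (hp : 0 ≤ p)
    (r : ℝ)
    (hout : ∀ φ ψ : C₀(M, ℂ),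
      (∀ x ∈ tsupport ⇑φ, r < infDist x W) →
      (∀ y ∈ tsupport ⇑ψ, r < infDist y W) →
      ρ φ * a * ρ ψ = 0)
    (φ : C₀(M, ℂ)) (hφ : ∀ x ∈ tsupport ⇑φ, r + p < infDist x W)
    (ψ : C₀(M, ℂ)) :
    ρ φ * a * ρ ψ = 0 ∧ ρ ψ * a * ρ φ = 0 := by
  rcases isEmpty_or_nonempty M with hM | hM
  · have hφ0 : φ = 0 := by ext x; exact isEmptyElim x
    subst hφ0
    simp
  obtain ⟨x₀⟩ := hM
  suffices hεbound : ∀ ε > (0 : ℝ), ‖ρ φ * a * ρ ψ‖ ≤ ε ∧ ‖ρ ψ * a * ρ φ‖ ≤ ε by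
    constructor <;>
    · rw [← norm_le_zero_iff]
      refine le_of_forall_pos_le_add (fun ε hε => ?_)
      rw [zero_add]
      first
        | exact (hεbound ε hε).1
        | exact (hεbound ε hε).2
  intro ε hε
  set C : ℝ := ‖a‖ * ‖ρ ψ‖ + 1 with hC
  have hCpos : 0 < C := by positivity
  set δ : ℝ := ε / C with hδdef
  have hδ : 0 < δ := div_pos hε hCpos
  -- find a compact set outside of which `φ` is small
  have hev : ∀ᶠ x in Filter.cocompact M, ‖φ x‖ < δ := by
    have := Metric.tendsto_nhds.mp (zero_at_infty φ) δ hδ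
    simpa [dist_zero_right] using this
  rw [Filter.hasBasis_cocompact.eventually_iff] at hev
  obtain ⟨K, hK, hKsmall⟩ := hev
  obtain ⟨R, hKR⟩ := hK.isBounded.subset_closedBall x₀
  -- truncation of φ
  set θ : M → ℝ := fun x => clamp (R + 1 - dist x x₀) with hθ
  have hθc : Continuous θ :=
    continuous_clamp.comp (continuous_const.sub (continuous_id.dist continuous_const))
  have hθb : ∀ x, ‖θ x‖ ≤ 1 := fun x => norm_clamp_le _
  set φ' : C₀(M, ℂ) := cmul θ hθc hθb φ with hφ'def
  -- φ' is close to φ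
  have hclose : ‖φ - φ'‖ ≤ δ := by
    rw [← ZeroAtInftyContinuousMap.norm_toBCF_eq_norm]
    rw [BoundedContinuousFunction.norm_le hδ.le]
    intro x
    have hx : ((φ - φ').toBCF : M → ℂ) x = (1 - θ x) • φ x := by
      simp [ZeroAtInftyContinuousMap.sub_apply, sub_smul, one_smul, hφ'def]
    rw [hx]
    by_cases hxK : dist x x₀ ≤ R
    · have : θ x = 1 := clamp_eq_one (by linarith)
      simp [this, hδ.le]
    · have hxnK : x ∉ K := fun hxk => hxK (by simpa [dist_comm] using hKR hxk)
      have hφx : ‖φ x‖ < δ := hKsmall hxnK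
      rw [norm_smul]
      calc ‖(1 : ℝ) - θ x‖ * ‖φ x‖ ≤ 1 * ‖φ x‖ := by
            refine mul_le_mul_of_nonneg_right ?_ (norm_nonneg _)
            rw [Real.norm_eq_abs, abs_le]
            have h1 := clamp_nonneg (R + 1 - dist x x₀)
            have h2 := clamp_le_one (R + 1 - dist x x₀)
            constructor <;> simp only [hθ] <;> nlinarith
        _ ≤ δ := by rw [one_mul]; exact hφx.le
  -- support of φ'
  have hsuppφ' : tsupport ⇑φ' ⊆ closedBall x₀ (R + 1) ∩ tsupport ⇑φ := by
    refine closure_minimal (fun x hx => ?_) (isClosed_closedBall.inter (isClosed_closure))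
    have hx1 : θ x • φ x ≠ 0 := hx
    constructor
    · have hθx : θ x ≠ 0 := fun h => hx1 (by simp [h])
      have := pos_of_clamp_ne_zero (t := R + 1 - dist x x₀) hθx
      simp only [mem_closedBall]
      linarith [this]
    · exact subset_closure (fun h => hx1 (by simp [h]))
  have hcomp : IsCompact (tsupport ⇑φ') :=
    (isCompact_closedBall x₀ (R + 1)).of_isClosed_subset isClosed_closure
      (hsuppφ'.trans Set.inter_subset_left)
  -- uniform gap on the support of φ'
  obtain ⟨ε₀, hε₀, hgap⟩ :
      ∃ ε₀ > (0 : ℝ), ∀ x ∈ tsupport ⇑φ', r + p + ε₀ ≤ infDist x W := by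
    rcases (tsupport ⇑φ').eq_empty_or_nonempty with he | hne
    · exact ⟨1, one_pos, fun x hx => absurd (he ▸ hx) (Set.notMem_empty x)⟩
    · obtain ⟨z, hz, hmin⟩ := hcomp.exists_isMinOn hne
        ((continuous_infDist_pt W).continuousOn)
    
      refine ⟨infDist z W - (r + p), ?_, fun x hx => ?_⟩
      · have := hφ z ((hsuppφ' hz).2)
        linarith
      · have := hmin hx
        simp only [Set.mem_setOf_eq] at this
        linarith [hmin hx]
  -- the cutoff near W
  set χ : M → ℝ := fun x => clamp ((infDist x W - r) * (4 / ε₀) - 1) with hχdef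
  have hχc : Continuous χ :=
    continuous_clamp.comp (((continuous_infDist_pt W).sub continuous_const).mul
      continuous_const |>.sub continuous_const)
  have hχb : ∀ x, ‖χ x‖ ≤ 1 := fun x => norm_clamp_le _
  set ψ₁ : C₀(M, ℂ) := cmul χ hχc hχb ψ with hψ₁def
  set ψ₂ : C₀(M, ℂ) := ψ - ψ₁ with hψ₂def
  -- support estimates
  have hsuppψ₁ : ∀ y ∈ tsupport ⇑ψ₁, r + ε₀ / 4 ≤ infDist y W := by
    have : tsupport ⇑ψ₁ ⊆ {y : M | r + ε₀ / 4 ≤ infDist y W} := by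
      refine closure_minimal (fun y hy => ?_)
        (IsClosed.preimage (continuous_infDist_pt W) isClosed_Ici)
      have hy1 : χ y • ψ y ≠ 0 := hy
      have hχy : χ y ≠ 0 := fun h => hy1 (by simp [h])
      have := pos_of_clamp_ne_zero (t := (infDist y W - r) * (4 / ε₀) - 1) hχy
      have h4 : 0 < 4 / ε₀ := by positivity
      have h5 : 1 / (4 / ε₀) < infDist y W - r := (div_lt_iff₀ h4).mpr (by linarith)
      have h6 : 1 / (4 / ε₀) = ε₀ / 4 := one_div_div 4 ε₀
      simp only [Set.mem_setOf_eq]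
      linarith
    exact fun y hy => this hy
  have hsuppψ₂ : ∀ y ∈ tsupport ⇑ψ₂, infDist y W ≤ r + ε₀ / 2 := by
    have : tsupport ⇑ψ₂ ⊆ {y : M | infDist y W ≤ r + ε₀ / 2} := by
      refine closure_minimal (fun y hy => ?_)
        (IsClosed.preimage (continuous_infDist_pt W) isClosed_Iic)
      have hy1 : ψ y - χ y • ψ y ≠ 0 := by
        simpa [hψ₂def, hψ₁def, ZeroAtInftyContinuousMap.sub_apply] using hy
      have hχy : χ y ≠ 1 := fun h => hy1 (by simp [h])
      have := lt_one_of_clamp_ne_one (t := (infDist y W - r) * (4 / ε₀) - 1) hχy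
      have h4 : 0 < 4 / ε₀ := by positivity
      have h5 : infDist y W - r < 2 / (4 / ε₀) := (lt_div_iff₀ h4).mpr (by linarith)
      have h6 : 2 / (4 / ε₀) = ε₀ / 2 := by
        rw [div_div_eq_mul_div]
        ring
      simp only [Set.mem_setOf_eq]
      linarith
    exact fun y hy => this hy
  have hsuppφ'W : ∀ x ∈ tsupport ⇑φ', r < infDist x W := fun x hx => by
    have := hgap x hx; linarith
  -- the two vanishing pieces
  have h1 : ρ φ' * a * ρ ψ₁ = 0 :=
    hout φ' ψ₁ hsuppφ'W (fun y hy => by have := hsuppψ₁ y hy; linarith)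
  have h1' : ρ ψ₁ * a * ρ φ' = 0 :=
    hout ψ₁ φ' (fun y hy => by have := hsuppψ₁ y hy; linarith) hsuppφ'W
  have hdist : ∀ x ∈ tsupport ⇑φ', ∀ y ∈ tsupport ⇑ψ₂, p < dist x y := by
    intro x hx y hy
    have h1 := hgap x hx
    have h2 := hsuppψ₂ y hy
    have h3 : infDist x W ≤ infDist y W + dist x y := infDist_le_infDist_add_dist
    linarith
  have h2 : ρ φ' * a * ρ ψ₂ = 0 := ha φ' ψ₂ hdist
  have h2' : ρ ψ₂ * a * ρ φ' = 0 :=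
    ha ψ₂ φ' (fun y hy x hx => by rw [dist_comm]; exact hdist x hx y hy)
  -- put things together
  have hψdecomp : ψ = ψ₁ + ψ₂ := by rw [hψ₂def]; abel
  have hφdecomp : φ = (φ - φ') + φ' := by abel
  have hρψ : ρ ψ = ρ ψ₁ + ρ ψ₂ := by
    conv_lhs => rw [hψdecomp]
    rw [map_add]
  have hρφ : ρ φ = ρ (φ - φ') + ρ φ' := by
    conv_lhs => rw [hφdecomp]
    rw [map_add]
  have hnorm_sub : ‖ρ (φ - φ')‖ ≤ δ :=
    (NonUnitalStarAlgHom.norm_apply_le ρ (φ - φ')).trans hclose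
  have hbound : δ * (‖a‖ * ‖ρ ψ‖) ≤ ε := by
    calc δ * (‖a‖ * ‖ρ ψ‖) ≤ δ * C := by
          refine mul_le_mul_of_nonneg_left ?_ hδ.le
          rw [hC]; linarith
      _ = ε := by rw [hδdef]; field_simp
  constructor
  · have hz : ρ φ' * a * ρ ψ = 0 := by
      conv_lhs => rw [hρψ]
      rw [mul_add, h1, h2, add_zero]
    have hexp : ρ φ * a * ρ ψ = ρ (φ - φ') * a * ρ ψ := by
      conv_lhs => rw [hρφ]
      rw [add_mul, add_mul, hz, add_zero]
    rw [hexp]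
    calc ‖ρ (φ - φ') * a * ρ ψ‖ ≤ ‖ρ (φ - φ') * a‖ * ‖ρ ψ‖ := norm_mul_le _ _
      _ ≤ ‖ρ (φ - φ')‖ * ‖a‖ * ‖ρ ψ‖ :=
          mul_le_mul_of_nonneg_right (norm_mul_le _ _) (norm_nonneg _)
      _ ≤ δ * ‖a‖ * ‖ρ ψ‖ := by
          refine mul_le_mul_of_nonneg_right
            (mul_le_mul_of_nonneg_right hnorm_sub (norm_nonneg _)) (norm_nonneg _)
      _ = δ * (‖a‖ * ‖ρ ψ‖) := by ring
      _ ≤ ε := hbound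
  · have hz : ρ ψ * a * ρ φ' = 0 := by
      conv_lhs => rw [hρψ]
      rw [add_mul, add_mul, h1', h2', add_zero]
    have hexp : ρ ψ * a * ρ φ = ρ ψ * a * ρ (φ - φ') := by
      conv_lhs => rw [hρφ]
      rw [mul_add, hz, add_zero]
    rw [hexp]
    calc ‖ρ ψ * a * ρ (φ - φ')‖ ≤ ‖ρ ψ * a‖ * ‖ρ (φ - φ')‖ := norm_mul_le _ _
      _ ≤ ‖ρ ψ‖ * ‖a‖ * ‖ρ (φ - φ')‖ :=
          mul_le_mul_of_nonneg_right (norm_mul_le _ _) (norm_nonneg _)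
      _ ≤ ‖ρ ψ‖ * ‖a‖ * δ :=
          mul_le_mul_of_nonneg_left hnorm_sub (by positivity)
      _ = δ * (‖a‖ * ‖ρ ψ‖) := by ring
      _ ≤ ε := hbound

/-- a finite-propagation operator which vanishes (in the weak,
two-sided sense) outside the `r`-neighborhood of `W` is supported near `W`. -/
theorem finite_propagation_supported_near
    (ρ : C₀(M, ℂ) →⋆ₙₐ[ℂ] (H →L[ℂ] H)) (hρ : Nondegenerate ρ)
    (W : Set M) (hW : IsClosed W)
    (a : H →L[ℂ] H) (p : ℝ) (ha : HasPropagationLE ρ a p)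
    (r : ℝ)
    (hout : ∀ φ ψ : C₀(M, ℂ),
      (∀ x ∈ tsupport ⇑φ, r < infDist x W) →
      (∀ y ∈ tsupport ⇑ψ, r < infDist y W) →
      ρ φ * a * ρ ψ = 0) :
    ∀ φ : C₀(M, ℂ), (∀ x ∈ tsupport ⇑φ, r + p < infDist x W) →
      ρ φ * a = 0 ∧ a * ρ φ = 0 := by
  intro φ hφ
  by_cases hp : 0 ≤ p
  · have key := fun ψ => FP_key ρ W a p ha hp r hout φ hφ ψ
    constructor
    · exact FPAux.ker_left ρ hρ _ (fun ψ => (key ψ).1)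
    · refine FPAux.ker_right ρ hρ _ (fun ψ => ?_)
      rw [← mul_assoc]
      exact (key ψ).2
  · push_neg at hp
    have hall : ∀ φ' ψ' : C₀(M, ℂ), ρ φ' * a * ρ ψ' = 0 := fun φ' ψ' =>
      ha φ' ψ' (fun x _ y _ => lt_of_lt_of_le hp dist_nonneg)
    have ha0 : a = 0 := by
      refine FPAux.ker_left ρ hρ a (fun ψ => ?_)
      refine FPAux.ker_right ρ hρ _ (fun φ' => ?_)
      rw [← mul_assoc]
      exact hall φ' ψ
    subst ha0
    simp
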